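/- Let D be an N×N matrix over the max-plus algebra ℝ_max that is block upper-triangular with respect to a partition of {1,…,N} into q consecutive blocks of sizes n₁,…,n_q (all blocks D_{ij} with j < i equal to ℰ). Suppose each diagonal block D_{ii} is irreducible with max-plus eigenvalue λ_i ∈ ℝ, and D_{i,i+1} ≠ ℰ for each i < q. Define ξ_q = λ_q and, for i < q, ξ_i = max( λ_i, max{ ξ_j : j > i and D_{ij} ≠ ℰ } ). Then there exist vectors v_1 ∈ ℝ^{n₁}, …, v_q ∈ ℝ^{n_q} with all entries finite such that the trajectories t_i(k) := v_i + k·ξ_i (for k ≥ 0) satisfy, for every i and every k ≥ 0, t_i(k+1) = D_{ii} ⊗ t_i(k) ⊕ ⊕_{j=i+1}^{q} D_{ij} ⊗ t_j(k), where ⊗ and ⊕ are the max-plus matrix–vector product and entrywise maximum. -/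

import Mathlib

/-- Max-plus matrix–vector product over `ℝ_max = ℝ ∪ {−∞}` (modelled as `WithBot ℝ`):
`(A ⊗ v) i = max_j (A i j + v j)`. -/
def mpMulVec {n : ℕ} (A : Matrix (Fin n) (Fin n) (WithBot ℝ)) (v : Fin n → WithBot ℝ) :
    Fin n → WithBot ℝ :=
  fun i => Finset.univ.sup fun j => A i j + v j

/-- Max-plus matrix product: `(A ⊗ B) i j = max_k (A i k + B k j)`. -/
def mpMul {n : ℕ} (A B : Matrix (Fin n) (Fin n) (WithBot ℝ)) :
    Matrix (Fin n) (Fin n) (WithBot ℝ) :=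
  Matrix.of fun i j => Finset.univ.sup fun k => A i k + B k j

/-- The max-plus identity matrix: `e = 0` on the diagonal, `ε = −∞` elsewhere. -/
def mpId (n : ℕ) : Matrix (Fin n) (Fin n) (WithBot ℝ) :=
  Matrix.of fun i j => if i = j then ((0 : ℝ) : WithBot ℝ) else ⊥

/-- Max-plus matrix power: `A^{⊗0} = E_n`, `A^{⊗(k+1)} = A ⊗ A^{⊗k}`. -/
def mpPow {n : ℕ} (A : Matrix (Fin n) (Fin n) (WithBot ℝ)) : ℕ → Matrix (Fin n) (Fin n) (WithBot ℝ)
  | 0 => mpId n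
  | k + 1 => mpMul A (mpPow A k)

/-- The max-plus trace: the maximum of the diagonal entries. -/
def mpTrace {n : ℕ} (M : Matrix (Fin n) (Fin n) (WithBot ℝ)) : WithBot ℝ :=
  Finset.univ.sup fun i => M i i

/-- A max-plus matrix is *irreducible* if no simultaneous row/column permutation puts it in
block upper-triangular form (with two nontrivial square diagonal blocks and an `ε`-block
below the diagonal). -/
def MPIrred {n : ℕ} (A : Matrix (Fin n) (Fin n) (WithBot ℝ)) : Prop :=
  ¬ ∃ (σ : Equiv.Perm (Fin n)) (k : ℕ), 0 < k ∧ k < n ∧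
      ∀ i j : Fin n, k ≤ (i : ℕ) → (j : ℕ) < k → A (σ i) (σ j) = ⊥

/-- The set of indices belonging to block `l`, for a block-index function `β`. -/
def blockSet {N q : ℕ} (β : Fin N → Fin q) (l : Fin q) : Finset (Fin N) :=
  Finset.univ.filter fun i => β i = l

/-- The diagonal block of `D` corresponding to block `l`, obtained by restricting `D` to the
indices of block `l` (listed in increasing order). -/
def diagBlock {N q : ℕ} (D : Matrix (Fin N) (Fin N) (WithBot ℝ)) (β : Fin N → Fin q)
    (l : Fin q) :
    Matrix (Fin (blockSet β l).card) (Fin (blockSet β l).card) (WithBot ℝ) :=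
  D.submatrix (fun a => (((blockSet β l).orderIsoOfFin rfl) a : Fin N))
    (fun b => (((blockSet β l).orderIsoOfFin rfl) b : Fin N))

/-- **Theorem 3 of the paper: Solution to a Reducible Dynamic System.**  Let `D` be an
`N × N` max-plus matrix, block upper-triangular with respect to a partition of `{1,…,N}`
into `q` consecutive blocks (given by the monotone surjective block-index map `β`; all
blocks strictly below the diagonal are `ε`).  Suppose each diagonal block is irreducible
with max-plus eigenvalue `λ l ∈ ℝ`, and each supradiagonal block `D_{l,l+1}` is not
identically `ε`.  Let `ξ` satisfy `ξ_q = λ_q` and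
`ξ_i = max(λ_i, max{ξ_j : j > i, D_{ij} ≠ ℰ})` for `i < q` (expressed uniformly below via a
possibly-empty max-plus supremum).  Then there is a vector `v` with all entries finite such
that the trajectories `t i (k) = v i + k · ξ (β i)` solve the recurrence
`t_i(k+1) = D_{ii} ⊗ t_i(k) ⊕ ⊕_{j=i+1}^{q} D_{ij} ⊗ t_j(k)`, i.e. (using the block
upper-triangularity) `t(k+1) = D ⊗ t(k)` rowwise. -/

lemma wb_add_sup (c x y : WithBot ℝ) : c + (x ⊔ y) = (c + x) ⊔ (c + y) := by
  induction c with
  | bot => simp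
  | coe c =>
    induction x with
    | bot => simp
    | coe x =>
      induction y with
      | bot => simp
      | coe y =>
        rw [← WithBot.coe_sup, ← WithBot.coe_add, ← WithBot.coe_add, ← WithBot.coe_add,
          ← WithBot.coe_sup]
        exact congrArg _ (max_add_add_left c x y).symm

lemma wb_add_finsetSup {ι : Type*} (s : Finset ι) (c : WithBot ℝ) (f : ι → WithBot ℝ) :
    c + s.sup f = s.sup fun i => c + f i := by
  classical
  induction s using Finset.cons_induction with
  | empty => simp
  | cons a s ha ih => simp [Finset.sup_cons, wb_add_sup, ih]

lemma wb_finsetSup_add {ι : Type*} (s : Finset ι) (c : WithBot ℝ) (f : ι → WithBot ℝ) :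
    s.sup f + c = s.sup fun i => f i + c := by
  rw [add_comm, wb_add_finsetSup]; simp [add_comm]

lemma wb_le_coe_add (y : WithBot ℝ) (z : ℝ) : ∃ c : ℝ, y ≤ ((z + c : ℝ) : WithBot ℝ) := by
  induction y with
  | bot => exact ⟨0, bot_le⟩
  | coe y => exact ⟨y - z, by norm_num⟩

lemma wb_unif_bound {ι : Type*} [Fintype ι] (f : ι → WithBot ℝ) (g : ι → ℝ) :
    ∃ c : ℝ, 0 ≤ c ∧ ∀ i, f i ≤ ((g i + c : ℝ) : WithBot ℝ) := by
  classical
  choose c hc using fun i => wb_le_coe_add (f i) (g i)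
  rcases Finset.univ.eq_empty_or_nonempty (α := ι) with h | h
  · exact ⟨0, le_refl 0, fun i => absurd (Finset.mem_univ i) (by simp [h])⟩
  · refine ⟨max 0 (Finset.univ.sup' h c), le_max_left _ _, fun i => ?_⟩
    refine (hc i).trans ?_
    have : c i ≤ max 0 (Finset.univ.sup' h c) :=
      le_max_of_le_right (Finset.le_sup' c (Finset.mem_univ i))
    exact_mod_cast add_le_add_right this (g i)

lemma not_mpirred_of_split {n : ℕ} (A : Matrix (Fin n) (Fin n) (WithBot ℝ))
    (S : Finset (Fin n)) (h1 : S.Nonempty) (h2 : Sᶜ.Nonempty)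
    (h : ∀ a ∈ S, ∀ b, b ∉ S → A a b = ⊥) : ¬ MPIrred A := by
  classical
  intro hirr
  apply hirr
  set k := Sᶜ.card with hk
  have hkm : k + S.card = n := by
    rw [hk, add_comm]
    simpa using Finset.card_add_card_compl S
  let e1 : Fin k ≃o (Sᶜ : Finset (Fin n)) := Sᶜ.orderIsoOfFin rfl
  let e2 : Fin S.card ≃o (S : Finset (Fin n)) := S.orderIsoOfFin rfl
  let σ : Equiv.Perm (Fin n) :=
    (finCongr hkm.symm).trans <| finSumFinEquiv.symm.trans <|
      (Equiv.sumCongr e1.toEquiv e2.toEquiv).trans <|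
      (Equiv.sumCongr (Equiv.subtypeEquivRight (fun x => Finset.mem_compl)) (Equiv.refl _)).trans <|
      (Equiv.sumComm _ _).trans (Equiv.sumCompl (· ∈ S))
  have key : ∀ p : Fin n, ((p : ℕ) < k → σ p ∉ S) ∧ (k ≤ (p : ℕ) → σ p ∈ S) := by
    intro p
    rcases hsum : finSumFinEquiv.symm (finCongr hkm.symm p) with a | b
    · have hval : (p : ℕ) = (a : ℕ) := by
        have h' := congrArg (fun z => ((finSumFinEquiv z : Fin (k + S.card)) : ℕ)) hsum.symm
        have h'' : (a : ℕ) = (p : ℕ) := by simpa using h'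
        exact h''.symm
      have hσ : σ p = (e1 a : Fin n) := by
        simp only [σ, Equiv.trans_apply, hsum, Equiv.sumCongr_apply, Sum.map_inl,
          Equiv.sumComm_apply, Sum.swap_inl]
        rfl
      constructor
      · intro _
        rw [hσ]
        have := (e1 a).2
        simp only [Finset.mem_compl] at this
        exact this
      · intro hkp
        exfalso
        have := a.2
        omega
    · have hval : (p : ℕ) = k + (b : ℕ) := by
        have h' := congrArg (fun z => ((finSumFinEquiv z : Fin (k + S.card)) : ℕ)) hsum.symm
        have h'' : k + (b : ℕ) = (p : ℕ) := by simpa using h'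
        exact h''.symm
      have hσ : σ p = (e2 b : Fin n) := by
        simp only [σ, Equiv.trans_apply, hsum, Equiv.sumCongr_apply, Sum.map_inr,
          Equiv.sumComm_apply, Sum.swap_inr]
        rfl
      constructor
      · intro hpk
        omega
      · intro _
        rw [hσ]
        exact (e2 b).2
  refine ⟨σ, k, ?_, ?_, ?_⟩
  · exact Finset.card_pos.mpr h2
  · have := Finset.card_pos.mpr h1
    omega
  · intro i j hi hj
    exact h _ ((key i).2 hi) _ ((key j).1 hj)

lemma eig_finite {n : ℕ} (A : Matrix (Fin n) (Fin n) (WithBot ℝ)) (hirr : MPIrred A)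
    (lam : ℝ) (w : Fin n → WithBot ℝ) (hw : ¬ ∀ a, w a = ⊥)
    (he : ∀ a, Finset.univ.sup (fun b => A a b + w b) = ((lam : ℝ) : WithBot ℝ) + w a) :
    ∃ w' : Fin n → ℝ, ∀ a,
      Finset.univ.sup (fun b => A a b + ((w' b : ℝ) : WithBot ℝ)) = ((lam + w' a : ℝ) : WithBot ℝ) := by
  classical
  have hfin : ∀ a, w a ≠ ⊥ := by
    by_contra hcon
    push_neg at hcon
    obtain ⟨a0, ha0⟩ := hcon
    set S : Finset (Fin n) := Finset.univ.filter (fun a => w a = ⊥) with hS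
    have h1 : S.Nonempty := ⟨a0, by simp [hS, ha0]⟩
    have h2 : Sᶜ.Nonempty := by
      push_neg at hw
      obtain ⟨a1, ha1⟩ := hw
      exact ⟨a1, by simp [hS, ha1]⟩
    refine not_mpirred_of_split A S h1 h2 ?_ hirr
    intro a ha b hb
    have hwa : w a = ⊥ := by simpa [hS] using ha
    have hwb : w b ≠ ⊥ := by simpa [hS] using hb
    have hsup : Finset.univ.sup (fun b => A a b + w b) = ⊥ := by
      rw [he a, hwa]; simp
    have hterm : A a b + w b = ⊥ := by
      have := Finset.le_sup (f := fun b => A a b + w b) (Finset.mem_univ b)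
      rw [hsup] at this
      exact le_bot_iff.mp this
    rcases WithBot.add_eq_bot.mp hterm with h' | h'
    · exact h'
    · exact absurd h' hwb
  refine ⟨fun a => WithBot.unbotD 0 (w a), fun a => ?_⟩
  have hco : ∀ b, (((WithBot.unbotD 0 (w b) : ℝ)) : WithBot ℝ) = w b := by
    intro b
    cases hwb : w b with
    | bot => exact absurd hwb (hfin b)
    | coe x => simp [hwb]
  simp only [hco]
  rw [he a, ← hco a]
  norm_cast

lemma mpirred_congr {n : ℕ} {A B : Matrix (Fin n) (Fin n) (WithBot ℝ)}
    (h : ∀ i j, B i j = ⊥ → A i j = ⊥) (hA : MPIrred A) : MPIrred B := by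
  intro ⟨σ, k, h1, h2, h3⟩
  exact hA ⟨σ, k, h1, h2, fun i j hi hj => h _ _ (h3 i j hi hj)⟩

/-- Iteration `y 0 = r`, `y (m+1) = A ⊗ y m`. -/
def mpIter {n : ℕ} (A : Matrix (Fin n) (Fin n) (WithBot ℝ)) (r : Fin n → WithBot ℝ) :
    ℕ → Fin n → WithBot ℝ
  | 0 => r
  | m + 1 => fun a => Finset.univ.sup fun b => A a b + mpIter A r m b

lemma mp_star {n : ℕ} (A : Matrix (Fin n) (Fin n) (WithBot ℝ)) (hirr : MPIrred A)
    (w : Fin n → ℝ) (μ : ℝ) (hμ : μ < 0)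
    (h1 : ∀ a b, A a b + ((w b : ℝ) : WithBot ℝ) ≤ ((μ + w a : ℝ) : WithBot ℝ))
    (r : Fin n → WithBot ℝ) (hr : ∃ b, r b ≠ ⊥) :
    ∃ x : Fin n → ℝ, ∀ a, ((x a : ℝ) : WithBot ℝ) =
      Finset.univ.sup (fun b => A a b + ((x b : ℝ) : WithBot ℝ)) ⊔ r a := by
  classical
  set y := mpIter A r with hy
  obtain ⟨c, hc0, hc⟩ := wb_unif_bound r w
  -- upper bound
  have hbd : ∀ m a, y m a ≤ (((m : ℝ) * μ + w a + c : ℝ) : WithBot ℝ) := by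
    intro m
    induction m with
    | zero => intro a; simpa [hy, mpIter] using hc a
    | succ m ih =>
      intro a
      have h6 : ((m + 1 : ℕ) : ℝ) = (m : ℝ) + 1 := by push_cast; ring
      rw [h6]
      refine Finset.sup_le fun b _ => ?_
      calc A a b + y m b ≤ A a b + (((m : ℝ) * μ + w b + c : ℝ) : WithBot ℝ) :=
            add_le_add_right (ih b) _
        _ = A a b + (((w b + ((m : ℝ) * μ + c) : ℝ)) : WithBot ℝ) := by
            congr 1
            norm_cast
            ring
        _ = (A a b + ((w b : ℝ) : WithBot ℝ)) + (((m : ℝ) * μ + c : ℝ) : WithBot ℝ) := by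
            rw [WithBot.coe_add, ← add_assoc]
        _ ≤ (((μ + w a : ℝ) : WithBot ℝ)) + (((m : ℝ) * μ + c : ℝ) : WithBot ℝ) :=
            add_le_add_left (h1 a b) _
        _ = ((((m : ℝ) + 1) * μ + w a + c : ℝ) : WithBot ℝ) := by
            norm_cast
            push_cast
            ring
  -- reachability
  have hreach : ∀ a, ∃ m, y m a ≠ ⊥ := by
    by_contra hcon
    push_neg at hcon
    obtain ⟨a0, ha0⟩ := hcon
    set T : Finset (Fin n) := Finset.univ.filter (fun a => ∀ m, y m a = ⊥) with hT
    obtain ⟨b0, hb0⟩ := hr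
    have h1' : T.Nonempty := ⟨a0, by simp [hT, ha0]⟩
    have h2' : Tᶜ.Nonempty := by
      refine ⟨b0, ?_⟩
      simp only [hT, Finset.mem_compl, Finset.mem_filter, Finset.mem_univ, true_and, not_forall]
      exact ⟨0, hb0⟩
    refine not_mpirred_of_split A T h1' h2' ?_ hirr
    intro a ha b hb
    have ha' : ∀ m, y m a = ⊥ := by simpa [hT] using ha
    have hb' : ∃ m, y m b ≠ ⊥ := by simpa [hT, not_forall] using hb
    obtain ⟨m, hm⟩ := hb'
    have hsup : y (m + 1) a = ⊥ := ha' (m + 1)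
    have hterm : A a b + y m b = ⊥ := by
      have hle := Finset.le_sup (f := fun b => A a b + y m b) (Finset.mem_univ b)
      have : Finset.univ.sup (fun b => A a b + y m b) = ⊥ := hsup
      rw [this] at hle
      exact le_bot_iff.mp hle
    rcases WithBot.add_eq_bot.mp hterm with h' | h'
    · exact h'
    · exact absurd h' hm
  choose ma hma using hreach
  -- the finite lower bounds
  have hL : ∀ a, ∃ La : ℝ, y (ma a) a = ((La : ℝ) : WithBot ℝ) := by
    intro a
    cases hv : y (ma a) a with
    | bot => exact absurd hv (hma a)
    | coe v => exact ⟨v, rfl⟩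
  choose L hLa using hL
  -- n > 0
  have hn : (Finset.univ : Finset (Fin n)).Nonempty := ⟨hr.choose, Finset.mem_univ _⟩
  -- choose M
  obtain ⟨Mt, hMt⟩ := exists_nat_ge (Finset.univ.sup' hn fun a => (w a + c - L a) / (-μ))
  set M : ℕ := max Mt (Finset.univ.sup' hn ma) with hM
  have hMma : ∀ a, ma a ≤ M := fun a =>
    le_max_of_le_right (Finset.le_sup' ma (Finset.mem_univ a))
  have hMbig : ∀ a, ((M : ℝ) + 1) * μ + w a + c ≤ L a := by
    intro a
    have h2 : (w a + c - L a) / (-μ) ≤ (Mt : ℝ) :=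
      le_trans (Finset.le_sup' (fun a => (w a + c - L a) / (-μ)) (Finset.mem_univ a)) hMt
    have h3 : (Mt : ℝ) ≤ (M : ℝ) := by exact_mod_cast le_max_left _ _
    have h4 : (w a + c - L a) / (-μ) ≤ (M : ℝ) + 1 := by linarith
    have h5 : (w a + c - L a) ≤ ((M : ℝ) + 1) * (-μ) := by
      rw [div_le_iff₀ (by linarith)] at h4
      linarith
    linarith
  -- define x'
  set x' : Fin n → WithBot ℝ := fun a => (Finset.range (M + 1)).sup (fun m => y m a) with hx'
  have hLx : ∀ a, ((L a : ℝ) : WithBot ℝ) ≤ x' a := by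
    intro a
    rw [← hLa a]
    exact Finset.le_sup (f := fun m => y m a) (Finset.mem_range.mpr (Nat.lt_succ_of_le (hMma a)))
  -- key: all iterates below x'
  have hkey : ∀ m a, y m a ≤ x' a := by
    intro m a
    rcases le_or_gt m M with hm | hm
    · exact Finset.le_sup (f := fun m => y m a) (Finset.mem_range.mpr (Nat.lt_succ_of_le hm))
    · refine le_trans (hbd m a) (le_trans ?_ (hLx a))
      refine WithBot.coe_le_coe.mpr ?_
      have : (m : ℝ) * μ ≤ ((M : ℝ) + 1) * μ := by
        have hm' : ((M : ℝ) + 1) ≤ (m : ℝ) := by exact_mod_cast hm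
        nlinarith
      have := hMbig a
      linarith
  -- x' is finite
  have hxfin : ∀ a, ∃ v : ℝ, x' a = ((v : ℝ) : WithBot ℝ) := by
    intro a
    cases hv : x' a with
    | bot =>
      exfalso
      have := hLx a
      rw [hv] at this
      simp at this
    | coe v => exact ⟨v, rfl⟩
  choose x hxc using hxfin
  refine ⟨x, fun a => ?_⟩
  have heq : x' a = Finset.univ.sup (fun b => A a b + x' b) ⊔ r a := by
    apply le_antisymm
    · refine Finset.sup_le fun m _ => ?_
      cases m with
      | zero => exact le_sup_of_le_right (le_refl _)
      | succ m =>
        refine le_sup_of_le_left ?_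
        refine Finset.sup_le fun b _ => ?_
        exact Finset.le_sup_of_le (Finset.mem_univ b) (add_le_add_right (hkey m b) _)
    · refine sup_le ?_ ?_
      · refine Finset.sup_le fun b _ => ?_
        rw [hx', wb_add_finsetSup]
        refine Finset.sup_le fun m hm => ?_
        refine le_trans ?_ (hkey (m + 1) a)
        exact Finset.le_sup (f := fun b => A a b + y m b) (Finset.mem_univ b)
      · exact Finset.le_sup (f := fun m => y m a) (Finset.mem_range.mpr (Nat.succ_pos M))
  rw [← hxc a, heq]
  congr 1
  apply Finset.sup_congr rfl
  intro b _
  rw [hxc b]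

lemma wb_sup_add_sup (X Y c : WithBot ℝ) : (X + c) ⊔ (Y + c) = (X ⊔ Y) + c := by
  rw [add_comm X c, add_comm Y c, add_comm _ c, wb_add_sup]

lemma wb_add_coe_add (d : WithBot ℝ) (p r : ℝ) :
    d + ((p + r : ℝ) : WithBot ℝ) = (d + ((p : ℝ) : WithBot ℝ)) + ((r : ℝ) : WithBot ℝ) := by
  rw [WithBot.coe_add, ← add_assoc]

lemma wb_norm_shift (d : WithBot ℝ) (p c : ℝ) :
    d + ((p : ℝ) : WithBot ℝ)
      = ((d + ((- c : ℝ) : WithBot ℝ)) + ((p : ℝ) : WithBot ℝ)) + ((c : ℝ) : WithBot ℝ) := by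
  induction d with
  | bot => simp
  | coe d =>
    norm_cast
    ring

lemma filter_sup_split {ι : Type*} (s : Finset ι) (p t : ι → Prop)
    [DecidablePred p] [DecidablePred t] (f : ι → WithBot ℝ) :
    (s.filter p).sup f = ((s.filter fun b => p b ∧ t b).sup f)
      ⊔ ((s.filter fun b => p b ∧ ¬ t b).sup f) := by
  classical
  rw [← Finset.sup_union]
  congr 1
  ext b
  simp only [Finset.mem_filter, Finset.mem_union]
  tauto


open Classical in
theorem stmt_15 {N q : ℕ} (D : Matrix (Fin N) (Fin N) (WithBot ℝ))
    (β : Fin N → Fin q) (hmono : Monotone β) (hsurj : Function.Surjective β)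
    (htri : ∀ i j : Fin N, β j < β i → D i j = ⊥)
    (lam : Fin q → ℝ)
    (hirr : ∀ l : Fin q, MPIrred (diagBlock D β l))
    (heig : ∀ l : Fin q, ∃ w : Fin (blockSet β l).card → WithBot ℝ,
      (¬ ∀ a, w a = ⊥) ∧
      ∀ a, mpMulVec (diagBlock D β l) w a = ((lam l : ℝ) : WithBot ℝ) + w a)
    (hsupra : ∀ l : ℕ, l + 1 < q → ∃ i j : Fin N,
      (β i : ℕ) = l ∧ (β j : ℕ) = l + 1 ∧ D i j ≠ ⊥)
    (xi : Fin q → ℝ)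
    (hxi : ∀ l : Fin q, ((xi l : ℝ) : WithBot ℝ) =
      max ((lam l : ℝ) : WithBot ℝ)
        ((Finset.univ.filter fun j : Fin q =>
            l < j ∧ ∃ a b : Fin N, β a = l ∧ β b = j ∧ D a b ≠ ⊥).sup
          fun j => ((xi j : ℝ) : WithBot ℝ))) :
    ∃ v : Fin N → ℝ, ∀ (k : ℕ) (a : Fin N),
      ((v a + ((k : ℝ) + 1) * xi (β a) : ℝ) : WithBot ℝ) =
        mpMulVec D (fun b => ((v b + (k : ℝ) * xi (β b) : ℝ) : WithBot ℝ)) a := by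
  classical
  -- edges go weakly up in block index and weakly down in xi
  have hedge : ∀ a b : Fin N, D a b ≠ ⊥ → β a ≤ β b ∧ xi (β b) ≤ xi (β a) := by
    intro a b hD
    have h1 : β a ≤ β b := by
      by_contra hcon
      exact hD (htri a b (lt_of_not_ge hcon))
    refine ⟨h1, ?_⟩
    rcases eq_or_lt_of_le h1 with heq | hlt
    · rw [← heq]
    · have hmem : β b ∈ Finset.univ.filter fun j : Fin q =>
          β a < j ∧ ∃ a' b' : Fin N, β a' = β a ∧ β b' = j ∧ D a' b' ≠ ⊥ := by
        simp only [Finset.mem_filter, Finset.mem_univ, true_and]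
        exact ⟨hlt, a, b, rfl, rfl, hD⟩
      have hle : ((xi (β b) : ℝ) : WithBot ℝ) ≤ ((xi (β a) : ℝ) : WithBot ℝ) := by
        rw [hxi (β a)]
        exact le_max_of_le_right (Finset.le_sup (f := fun j => ((xi j : ℝ) : WithBot ℝ)) hmem)
      exact_mod_cast hle
  have hlamxi : ∀ l, lam l ≤ xi l := by
    intro l
    have : ((lam l : ℝ) : WithBot ℝ) ≤ ((xi l : ℝ) : WithBot ℝ) := by
      rw [hxi l]; exact le_max_left _ _
    exact_mod_cast this
  -- main induction: construction of v good on blocks ≥ q - j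
  have main : ∀ j : ℕ, ∃ v : Fin N → ℝ, ∀ a : Fin N, q - j ≤ (β a : ℕ) →
      (((v a + xi (β a) : ℝ) : WithBot ℝ) =
        (Finset.univ.filter fun b => xi (β b) = xi (β a)).sup
          (fun b => D a b + ((v b : ℝ) : WithBot ℝ))) ∧
      (∀ b, D a b + ((v b : ℝ) : WithBot ℝ) ≤ ((v a + xi (β a) : ℝ) : WithBot ℝ)) := by
    intro j
    induction j with
    | zero =>
      refine ⟨0, fun a ha => absurd ha ?_⟩
      have := (β a).2
      omega
    | succ j ih =>
      obtain ⟨v', hv'⟩ := ih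
      by_cases hq : q ≤ j
      · exact ⟨v', fun a ha => hv' a (by omega)⟩
      · -- induction step, j < q
        push_neg at hq
        set l : Fin q := ⟨q - (j + 1), by omega⟩ with hldef
        have hlval : (l : ℕ) = q - (j + 1) := rfl
        -- block data
        have hmemblock : ∀ b : Fin N, β b = l → b ∈ blockSet β l := by
          intro b hb; simp [blockSet, hb]
        set e := (blockSet β l).orderIsoOfFin rfl with hedef
        set emb : Fin (blockSet β l).card → Fin N := fun a' => (e a' : Fin N) with hembdef
        have hembβ : ∀ a', β (emb a') = l := by
          intro a'
          have h := (e a').2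
          simp only [blockSet, Finset.mem_filter] at h
          exact h.2
        have hsurjb : ∀ b : Fin N, β b = l → ∃ b', emb b' = b := by
          intro b hb
          exact ⟨e.symm ⟨b, hmemblock b hb⟩, by simp [hembdef]⟩
        have himg : blockSet β l = Finset.univ.image emb := by
          ext b
          simp only [Finset.mem_image, Finset.mem_univ, true_and]
          constructor
          · intro hb; exact ⟨e.symm ⟨b, hb⟩, by simp [hembdef]⟩
          · rintro ⟨b', rfl⟩; exact (e b').2
        have hdiag : ∀ a' b', diagBlock D β l a' b' = D (emb a') (emb b') := fun _ _ => rfl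
        -- finite eigenvector for the diagonal block
        obtain ⟨w0, hw0ne, hw0e⟩ := heig l
        obtain ⟨w, hw⟩ := eig_finite (diagBlock D β l) (hirr l) (lam l) w0 hw0ne
          (fun a => hw0e a)
        -- bound for eigen-terms
        have hwterm : ∀ a' b', D (emb a') (emb b') + ((w b' : ℝ) : WithBot ℝ)
            ≤ ((lam l + w a' : ℝ) : WithBot ℝ) := by
          intro a' b'
          rw [← hw a', ← hdiag a' b']
          exact Finset.le_sup (f := fun b' => diagBlock D β l a' b' + ((w b' : ℝ) : WithBot ℝ))
            (Finset.mem_univ b')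
        -- facts about rows not in block l
        have hrow_lt : ∀ a b : Fin N, (l : ℕ) + 1 ≤ (β a : ℕ) → β b = l → D a b = ⊥ := by
          intro a b ha hb
          apply htri
          rw [hb]
          exact Fin.lt_def.mpr (by omega)
        by_cases hcase : xi l = lam l
        · -- CASE A : eigenvector + large constant
          obtain ⟨c, hc0, hc⟩ := wb_unif_bound (ι := Fin (blockSet β l).card × Fin N)
            (fun p => D (emb p.1) p.2 + ((v' p.2 : ℝ) : WithBot ℝ)) (fun p => w p.1 + lam l)
          set v : Fin N → ℝ :=
            fun b => if hb : β b = l then w (e.symm ⟨b, hmemblock b hb⟩) + c else v' b with hvdef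
          have hvblock : ∀ b', v (emb b') = w b' + c := by
            intro b'
            have hb : β (emb b') = l := hembβ b'
            simp only [hvdef, dif_pos hb]
            congr 2
            have h2 : (⟨emb b', hmemblock _ hb⟩ : {x // x ∈ blockSet β l}) = e b' :=
              Subtype.ext rfl
            rw [h2, OrderIso.symm_apply_apply]
          have hvnot : ∀ b, β b ≠ l → v b = v' b := by
            intro b hb; simp [hvdef, dif_neg hb]
          refine ⟨v, fun a ha => ?_⟩
          by_cases hal : β a = l
          · -- row in block l
            obtain ⟨a', rfl⟩ := hsurjb a hal
            have hva : v (emb a') = w a' + c := hvblock a'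
            have hxia : xi (β (emb a')) = xi l := by rw [hembβ a']
            -- the two parts of the sup
            have hLHS : ((v (emb a') + xi (β (emb a')) : ℝ) : WithBot ℝ)
                = ((w a' + c + lam l : ℝ) : WithBot ℝ) := by
              rw [hva, hxia, hcase]
            have hpart1 : (Finset.univ.filter fun b : Fin N =>
                  (xi (β b) = xi (β (emb a')) ∧ β b = l)).sup
                  (fun b => D (emb a') b + ((v b : ℝ) : WithBot ℝ))
                = ((w a' + c + lam l : ℝ) : WithBot ℝ) := by
              have hfe : (Finset.univ.filter fun b : Fin N =>
                  (xi (β b) = xi (β (emb a')) ∧ β b = l)) = blockSet β l := by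
                ext b
                simp only [Finset.mem_filter, Finset.mem_univ, true_and, blockSet]
                constructor
                · rintro ⟨-, h2⟩; exact h2
                · intro h2; exact ⟨by rw [h2, hxia], h2⟩
              rw [hfe, himg, Finset.sup_image]
              have : ∀ b' , ((fun b => D (emb a') b + ((v b : ℝ) : WithBot ℝ)) ∘ emb) b'
                  = (diagBlock D β l a' b' + ((w b' : ℝ) : WithBot ℝ)) + ((c : ℝ) : WithBot ℝ) := by
                intro b'
                simp only [Function.comp, hvblock b', hdiag]
                rw [wb_add_coe_add]
              rw [Finset.sup_congr rfl (fun b' _ => this b'), ← wb_finsetSup_add, hw a']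
              norm_cast
              ring
            have hpart2 : ∀ b : Fin N, β b ≠ l →
                D (emb a') b + ((v b : ℝ) : WithBot ℝ) ≤ ((w a' + c + lam l : ℝ) : WithBot ℝ) := by
              intro b hb
              rw [hvnot b hb]
              refine le_trans (hc ⟨a', b⟩) ?_
              exact le_of_eq (by norm_cast; ring)
            constructor
            · rw [hLHS, filter_sup_split (Finset.univ : Finset (Fin N)) _ (fun b => β b = l)]
              rw [hpart1]
              rw [sup_eq_left.mpr ?_]
              refine Finset.sup_le fun b hb => ?_
              exact hpart2 b (Finset.mem_filter.mp hb).2.2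
            · intro b
              rw [hLHS]
              by_cases hbl : β b = l
              · obtain ⟨b', rfl⟩ := hsurjb b hbl
                rw [hvblock b', wb_add_coe_add, ← hdiag]
                refine le_trans (add_le_add_left (hwterm a' b') _) ?_
                exact le_of_eq (by norm_cast; ring)
              · exact hpart2 b hbl
          · -- row beyond block l
            have ha1 : (l : ℕ) + 1 ≤ (β a : ℕ) := by
              have : (β a : ℕ) ≠ (l : ℕ) := fun h => hal (Fin.ext h)
              omega
            obtain ⟨hI', hII'⟩ := hv' a (by omega)
            have hva : v a = v' a := hvnot a (fun h => hal h)
            have hterm_eq : ∀ b : Fin N, D a b + ((v b : ℝ) : WithBot ℝ)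
                = D a b + ((v' b : ℝ) : WithBot ℝ) := by
              intro b
              by_cases hbl : β b = l
              · rw [hrow_lt a b ha1 hbl]
                simp
              · rw [hvnot b hbl]
            constructor
            · rw [hva, hI']
              exact (Finset.sup_congr rfl (fun b _ => hterm_eq b)).symm
            · intro b
              rw [hva, hterm_eq b]
              exact hII' b
        · -- CASE B : Kleene star construction
          have hlamlt : lam l < xi l := lt_of_le_of_ne (hlamxi l) (Ne.symm hcase)
          -- the fast successor block j0
          have hxis : ((Finset.univ.filter fun j : Fin q =>
              l < j ∧ ∃ a b : Fin N, β a = l ∧ β b = j ∧ D a b ≠ ⊥).sup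
              fun j => ((xi j : ℝ) : WithBot ℝ)) = ((xi l : ℝ) : WithBot ℝ) := by
            rcases max_cases ((lam l : ℝ) : WithBot ℝ)
              ((Finset.univ.filter fun j : Fin q =>
                l < j ∧ ∃ a b : Fin N, β a = l ∧ β b = j ∧ D a b ≠ ⊥).sup
                fun j => ((xi j : ℝ) : WithBot ℝ)) with ⟨h1, h2⟩ | ⟨h1, h2⟩
            · exfalso
              apply hcase
              have := (hxi l).trans h1
              exact_mod_cast this
            · exact ((hxi l).trans h1).symm
          have hfne : (Finset.univ.filter fun j : Fin q =>
              l < j ∧ ∃ a b : Fin N, β a = l ∧ β b = j ∧ D a b ≠ ⊥).Nonempty := by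
            rw [Finset.nonempty_iff_ne_empty]
            intro hemp
            rw [hemp] at hxis
            simp at hxis
          obtain ⟨j0, hj0mem, hj0⟩ := Finset.exists_mem_eq_sup _ hfne
            (fun j : Fin q => ((xi j : ℝ) : WithBot ℝ))
          rw [hxis] at hj0
          have hj0xi : xi j0 = xi l := by exact_mod_cast hj0.symm
          simp only [Finset.mem_filter, Finset.mem_univ, true_and] at hj0mem
          obtain ⟨hj0lt, a0, b0, ha0, hb0, hD0⟩ := hj0mem
          -- the coupling vector r
          set r : Fin (blockSet β l).card → WithBot ℝ := fun a' =>
            (Finset.univ.filter fun b : Fin N => xi (β b) = xi l ∧ β b ≠ l).sup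
              (fun b => D (emb a') b + ((v' b - xi l : ℝ) : WithBot ℝ)) with hrdef
          have hrne : ∃ a', r a' ≠ ⊥ := by
            obtain ⟨a0', ha0'⟩ := hsurjb a0 ha0
            refine ⟨a0', ?_⟩
            have hb0mem : b0 ∈ Finset.univ.filter fun b : Fin N =>
                xi (β b) = xi l ∧ β b ≠ l := by
              simp only [Finset.mem_filter, Finset.mem_univ, true_and]
              refine ⟨by rw [hb0, hj0xi], ?_⟩
              rw [hb0]
              exact fun h => absurd h (ne_of_gt hj0lt)
            have hterm : D (emb a0') b0 + ((v' b0 - xi l : ℝ) : WithBot ℝ) ≠ ⊥ := by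
              rw [ha0']
              intro h
              rcases WithBot.add_eq_bot.mp h with h' | h'
              · exact hD0 h'
              · exact WithBot.coe_ne_bot h'
            have hle := Finset.le_sup
              (f := fun b => D (emb a0') b + ((v' b - xi l : ℝ) : WithBot ℝ)) hb0mem
            intro hbot
            apply hterm
            apply le_bot_iff.mp
            rw [← hbot]
            exact hle
          -- the normalized matrix A'
          set A' : Matrix (Fin (blockSet β l).card) (Fin (blockSet β l).card) (WithBot ℝ) :=
            Matrix.of fun a' b' => D (emb a') (emb b') + ((- xi l : ℝ) : WithBot ℝ) with hA'def
          have hirr' : MPIrred A' := by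
            refine mpirred_congr (fun i j h => ?_) (hirr l)
            rw [hdiag]
            rcases WithBot.add_eq_bot.mp h with h' | h'
            · exact h'
            · exact absurd h' WithBot.coe_ne_bot
          have h1 : ∀ a' b', A' a' b' + ((w b' : ℝ) : WithBot ℝ)
              ≤ (((lam l - xi l) + w a' : ℝ) : WithBot ℝ) := by
            intro a' b'
            have : A' a' b' + ((w b' : ℝ) : WithBot ℝ)
                = (D (emb a') (emb b') + ((w b' : ℝ) : WithBot ℝ)) + ((- xi l : ℝ) : WithBot ℝ) := by
              show (D (emb a') (emb b') + _) + _ = _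
              rw [add_assoc, add_assoc, add_comm ((- xi l : ℝ) : WithBot ℝ)]
            rw [this]
            refine le_trans (add_le_add_left (hwterm a' b') _) ?_
            exact le_of_eq (by norm_cast; ring)
          obtain ⟨x, hx⟩ := mp_star A' hirr' w (lam l - xi l) (by linarith) h1 r hrne
          -- the uniform bound M
          obtain ⟨M, hM0, hMb⟩ := wb_unif_bound (ι := Fin (blockSet β l).card × Fin N)
            (fun p => D (emb p.1) p.2 + ((v' p.2 : ℝ) : WithBot ℝ)) (fun p => x p.1 + xi l)
          set v : Fin N → ℝ := fun b => if hb : β b = l then x (e.symm ⟨b, hmemblock b hb⟩)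
            else (if xi (β b) < xi l then v' b - M else v' b) with hvdef
          have hvblock : ∀ b', v (emb b') = x b' := by
            intro b'
            have hb : β (emb b') = l := hembβ b'
            simp only [hvdef, dif_pos hb]
            congr 1
            have h2 : (⟨emb b', hmemblock _ hb⟩ : {x // x ∈ blockSet β l}) = e b' :=
              Subtype.ext rfl
            rw [h2, OrderIso.symm_apply_apply]
          have hvslow : ∀ b, β b ≠ l → xi (β b) < xi l → v b = v' b - M := by
            intro b hb hs; simp [hvdef, dif_neg hb, if_pos hs]
          have hvns : ∀ b, β b ≠ l → ¬ (xi (β b) < xi l) → v b = v' b := by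
            intro b hb hs; simp [hvdef, dif_neg hb, if_neg hs]
          refine ⟨v, fun a ha => ?_⟩
          by_cases hal : β a = l
          · -- row in block l
            obtain ⟨a', rfl⟩ := hsurjb a hal
            have hxia : xi (β (emb a')) = xi l := by rw [hembβ a']
            have hLHS : ((v (emb a') + xi (β (emb a')) : ℝ) : WithBot ℝ)
                = ((x a' : ℝ) : WithBot ℝ) + ((xi l : ℝ) : WithBot ℝ) := by
              rw [hvblock a', hxia]
              norm_cast
            -- part 1 : the diagonal part
            have hpart1 : (Finset.univ.filter fun b : Fin N =>
                  (xi (β b) = xi (β (emb a')) ∧ β b = l)).sup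
                  (fun b => D (emb a') b + ((v b : ℝ) : WithBot ℝ))
                = (Finset.univ.sup fun b' => A' a' b' + ((x b' : ℝ) : WithBot ℝ))
                    + ((xi l : ℝ) : WithBot ℝ) := by
              have hfe : (Finset.univ.filter fun b : Fin N =>
                  (xi (β b) = xi (β (emb a')) ∧ β b = l)) = blockSet β l := by
                ext b
                simp only [Finset.mem_filter, Finset.mem_univ, true_and, blockSet]
                constructor
                · rintro ⟨-, h2⟩; exact h2
                · intro h2; exact ⟨by rw [h2, hxia], h2⟩
              rw [hfe]
              conv_lhs => rw [himg, Finset.sup_image]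
              rw [wb_finsetSup_add]
              refine Finset.sup_congr rfl fun b' _ => ?_
              simp only [Function.comp, hvblock b']
              show D (emb a') (emb b') + ((x b' : ℝ) : WithBot ℝ)
                  = ((D (emb a') (emb b') + ((- xi l : ℝ) : WithBot ℝ)) + ((x b' : ℝ) : WithBot ℝ))
                    + ((xi l : ℝ) : WithBot ℝ)
              exact wb_norm_shift _ _ _
            -- part 2 : the fast coupling part
            have hpart2 : (Finset.univ.filter fun b : Fin N =>
                  (xi (β b) = xi (β (emb a')) ∧ ¬ β b = l)).sup
                  (fun b => D (emb a') b + ((v b : ℝ) : WithBot ℝ))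
                = r a' + ((xi l : ℝ) : WithBot ℝ) := by
              rw [hrdef, wb_finsetSup_add]
              have hfe : (Finset.univ.filter fun b : Fin N =>
                  (xi (β b) = xi (β (emb a')) ∧ ¬ β b = l))
                  = (Finset.univ.filter fun b : Fin N => xi (β b) = xi l ∧ β b ≠ l) := by
                ext b
                simp only [Finset.mem_filter, Finset.mem_univ, true_and, hxia]
              rw [hfe]
              refine Finset.sup_congr rfl fun b hb => ?_
              simp only [Finset.mem_filter, Finset.mem_univ, true_and] at hb
              have hvb : v b = v' b := hvns b hb.2 (by rw [hb.1]; exact lt_irrefl _)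
              rw [hvb, add_assoc]
              congr 1
              norm_cast
              ring
            have hxeq := hx a'
            constructor
            · rw [hLHS, filter_sup_split (Finset.univ : Finset (Fin N)) _ (fun b => β b = l),
                hpart1, hpart2, wb_sup_add_sup, ← hxeq]
            · intro b
              rw [hLHS]
              by_cases hbl : β b = l
              · obtain ⟨b', rfl⟩ := hsurjb b hbl
                rw [hvblock b']
                have hterm : D (emb a') (emb b') + ((x b' : ℝ) : WithBot ℝ)
                    = (A' a' b' + ((x b' : ℝ) : WithBot ℝ)) + ((xi l : ℝ) : WithBot ℝ) := by
                  show D (emb a') (emb b') + ((x b' : ℝ) : WithBot ℝ)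
                      = ((D (emb a') (emb b') + ((- xi l : ℝ) : WithBot ℝ)) + ((x b' : ℝ) : WithBot ℝ))
                        + ((xi l : ℝ) : WithBot ℝ)
                  exact wb_norm_shift _ _ _
                rw [hterm, hxeq]
                refine add_le_add_left (le_trans ?_ le_sup_left) _
                exact Finset.le_sup (f := fun b' => A' a' b' + ((x b' : ℝ) : WithBot ℝ))
                  (Finset.mem_univ b')
              · by_cases hbf : xi (β b) = xi l
                · -- fast coupling
                  have hvb : v b = v' b := hvns b hbl (by rw [hbf]; exact lt_irrefl _)
                  have hterm : D (emb a') b + ((v b : ℝ) : WithBot ℝ)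
                      = (D (emb a') b + ((v' b - xi l : ℝ) : WithBot ℝ)) + ((xi l : ℝ) : WithBot ℝ) := by
                    rw [hvb, add_assoc]
                    congr 1
                    norm_cast
                    ring
                  rw [hterm, hxeq]
                  refine add_le_add_left (le_trans ?_ le_sup_right) _
                  refine Finset.le_sup (f := fun b => D (emb a') b + ((v' b - xi l : ℝ) : WithBot ℝ)) ?_
                  simp only [Finset.mem_filter, Finset.mem_univ, true_and]
                  exact ⟨hbf, hbl⟩
                · -- slow coupling
                  by_cases hD : D (emb a') b = ⊥
                  · rw [hD]
                    simp
                  · have hslow : xi (β b) < xi l := by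
                      have h2 := (hedge (emb a') b hD).2
                      rw [hxia] at h2
                      exact lt_of_le_of_ne h2 hbf
                    have hvb : v b = v' b - M := hvslow b hbl hslow
                    have hterm : D (emb a') b + ((v b : ℝ) : WithBot ℝ)
                        = (D (emb a') b + ((v' b : ℝ) : WithBot ℝ)) + ((- M : ℝ) : WithBot ℝ) := by
                      rw [hvb, add_assoc]
                      congr 1
                    rw [hterm]
                    refine le_trans (add_le_add_left (hMb ⟨a', b⟩) _) ?_
                    exact le_of_eq (by norm_cast; ring)
          · -- row beyond block l
            have ha1 : (l : ℕ) + 1 ≤ (β a : ℕ) := by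
              have : (β a : ℕ) ≠ (l : ℕ) := fun h => hal (Fin.ext h)
              omega
            obtain ⟨hI', hII'⟩ := hv' a (by omega)
            by_cases haslow : xi (β a) < xi l
            · -- shifted row
              have hva : v a = v' a - M := hvslow a (fun h => hal h) haslow
              have hLHS : ((v a + xi (β a) : ℝ) : WithBot ℝ)
                  = ((v' a + xi (β a) : ℝ) : WithBot ℝ) + ((- M : ℝ) : WithBot ℝ) := by
                rw [hva]
                norm_cast
                ring
              constructor
              · rw [hLHS, hI', wb_finsetSup_add]
                refine Finset.sup_congr rfl fun b hb => ?_
                simp only [Finset.mem_filter, Finset.mem_univ, true_and] at hb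
                have hbslow : xi (β b) < xi l := by rw [hb]; exact haslow
                have hbl : β b ≠ l := by
                  intro h
                  rw [h] at hbslow
                  exact lt_irrefl _ hbslow
                rw [hvslow b hbl hbslow, add_assoc]
                congr 1
              · intro b
                rw [hLHS]
                by_cases hbl : β b = l
                · rw [hrow_lt a b ha1 hbl]
                  simp
                · by_cases hbs : xi (β b) < xi l
                  · rw [hvslow b hbl hbs]
                    have hterm : D a b + ((v' b - M : ℝ) : WithBot ℝ)
                        = (D a b + ((v' b : ℝ) : WithBot ℝ)) + ((- M : ℝ) : WithBot ℝ) := by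
                      rw [add_assoc]
                      congr 1
                    rw [hterm]
                    exact add_le_add_left (hII' b) _
                  · by_cases hD : D a b = ⊥
                    · rw [hD]; simp
                    · exfalso
                      have h2 := (hedge a b hD).2
                      exact hbs (lt_of_le_of_lt h2 haslow)
            · -- unshifted row
              have hva : v a = v' a := hvns a (fun h => hal h) haslow
              have hterm_eq : ∀ b : Fin N, xi (β b) = xi (β a) →
                  D a b + ((v b : ℝ) : WithBot ℝ) = D a b + ((v' b : ℝ) : WithBot ℝ) := by
                intro b hb
                by_cases hbl : β b = l
                · rw [hrow_lt a b ha1 hbl]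
                  simp
                · rw [hvns b hbl (by rw [hb]; exact haslow)]
              constructor
              · rw [hva, hI']
                refine (Finset.sup_congr rfl fun b hb => ?_).symm
                simp only [Finset.mem_filter, Finset.mem_univ, true_and] at hb
                exact hterm_eq b hb
              · intro b
                rw [hva]
                by_cases hbl : β b = l
                · rw [hrow_lt a b ha1 hbl]
                  simp
                · by_cases hbs : xi (β b) < xi l
                  · rw [hvslow b hbl hbs]
                    have hterm : D a b + ((v' b - M : ℝ) : WithBot ℝ)
                        = (D a b + ((v' b : ℝ) : WithBot ℝ)) + ((- M : ℝ) : WithBot ℝ) := by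
                      rw [add_assoc]
                      congr 1
                    rw [hterm]
                    refine le_trans (add_le_add_right (WithBot.coe_le_coe.mpr
                      (by linarith : (- M : ℝ) ≤ (0 : ℝ))) _) ?_
                    rw [WithBot.coe_zero, add_zero]
                    exact hII' b
                  · rw [hvns b hbl hbs]
                    exact hII' b
  -- conclude
  obtain ⟨v, hv⟩ := main q
  have hgood : ∀ a, _ := fun a => hv a (by omega)
  refine ⟨v, fun k a => ?_⟩
  obtain ⟨hI, hII⟩ := hgood a
  show _ = Finset.univ.sup fun b => D a b + ((v b + (k : ℝ) * xi (β b) : ℝ) : WithBot ℝ)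
  -- attainment of the filtered sup
  have hne : (Finset.univ.filter fun b => xi (β b) = xi (β a)).Nonempty :=
    ⟨a, by simp⟩
  obtain ⟨b0, hb0mem, hb0⟩ := Finset.exists_mem_eq_sup _ hne
    (fun b => D a b + ((v b : ℝ) : WithBot ℝ))
  have hb0xi : xi (β b0) = xi (β a) := by
    simpa using (Finset.mem_filter.mp hb0mem).2
  rw [← hI] at hb0
  apply le_antisymm
  · -- LHS ≤ sup: witness b0
    refine le_trans ?_ (Finset.le_sup (f := fun b =>
      D a b + ((v b + (k : ℝ) * xi (β b) : ℝ) : WithBot ℝ)) (Finset.mem_univ b0))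
    show ((v a + ((k : ℝ) + 1) * xi (β a) : ℝ) : WithBot ℝ)
        ≤ D a b0 + ((v b0 + (k : ℝ) * xi (β b0) : ℝ) : WithBot ℝ)
    have h3 : D a b0 + ((v b0 + (k : ℝ) * xi (β b0) : ℝ) : WithBot ℝ)
        = (D a b0 + ((v b0 : ℝ) : WithBot ℝ)) + (((k : ℝ) * xi (β a) : ℝ) : WithBot ℝ) := by
      rw [hb0xi, add_assoc]
      congr 1
    rw [h3, ← hb0]
    refine le_of_eq ?_
    norm_cast
    push_cast
    ring
  · refine Finset.sup_le fun b _ => ?_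
    by_cases hD : D a b = ⊥
    · simp [hD]
    · have hxb : xi (β b) ≤ xi (β a) := (hedge a b hD).2
      have h2 : D a b + ((v b + (k : ℝ) * xi (β b) : ℝ) : WithBot ℝ)
          = (D a b + ((v b : ℝ) : WithBot ℝ)) + (((k : ℝ) * xi (β b) : ℝ) : WithBot ℝ) := by
        rw [add_assoc]; congr 1
      rw [h2]
      calc (D a b + ((v b : ℝ) : WithBot ℝ)) + (((k : ℝ) * xi (β b) : ℝ) : WithBot ℝ)
          ≤ ((v a + xi (β a) : ℝ) : WithBot ℝ) + (((k : ℝ) * xi (β b) : ℝ) : WithBot ℝ) :=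
            add_le_add_left (hII b) _
        _ ≤ ((v a + xi (β a) : ℝ) : WithBot ℝ) + (((k : ℝ) * xi (β a) : ℝ) : WithBot ℝ) := by
            apply add_le_add_right
            refine WithBot.coe_le_coe.mpr ?_
            have : (0 : ℝ) ≤ (k : ℝ) := Nat.cast_nonneg k
            nlinarith
        _ = ((v a + ((k : ℝ) + 1) * xi (β a) : ℝ) : WithBot ℝ) := by
            norm_cast
            push_cast
            ring
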